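/- Let r : [0,∞) → ℝ be continuous and strictly positive, and suppose the arithmetic mean failure rate A(t) = (1/t)∫₀ᵗ r(u) du is monotone non-decreasing on (0,∞) (the IFRA property). Then the geometric aging intensity satisfies L^G(t) ≥ 1 and the harmonic aging intensity satisfies L^H(t) ≥ 1 for all t > 0. -/

import Mathlib

open MeasureTheory Set Filter Real Topology

theorem IFRA_implies_GAI_HAI_ge_one
    (r : ℝ → ℝ) (hc : ContinuousOn r (Set.Ici 0))
    (hpos : ∀ u ∈ Set.Ici (0 : ℝ), 0 < r u)
    (hIFRA : MonotoneOn (fun t => (1 / t) * ∫ u in (0:ℝ)..t, r u) (Set.Ioi 0)) :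
    ∀ t > (0:ℝ),
      (1:ℝ) ≤ r t / Real.exp ((1 / t) * ∫ u in (0:ℝ)..t, Real.log (r u)) ∧
      (1:ℝ) ≤ r t / ((1 / t) * ∫ u in (0:ℝ)..t, (r u)⁻¹)⁻¹ := by
  intro t ht
  have htIcc : Set.Icc (0:ℝ) t ⊆ Set.Ici 0 := fun x hx => hx.1
  have hct : ContinuousOn r (Set.Icc 0 t) := hc.mono htIcc
  obtain ⟨x0, hx0, hmin'⟩ := isCompact_Icc.exists_isMinOn
    ⟨0, Set.left_mem_Icc.2 ht.le⟩ hct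
  have hmin : ∀ y ∈ Set.Icc (0:ℝ) t, r x0 ≤ r y := fun y hy => hmin' hy
  set m := r x0 with hm_def
  have hm : 0 < m := hpos x0 (htIcc hx0)
  have hri : IntervalIntegrable r volume 0 t := by
    apply ContinuousOn.intervalIntegrable
    rwa [Set.uIcc_of_le ht.le]
  -- Step 1: r t ≥ A t
  have hFt : HasDerivAt (fun x => ∫ u in (0:ℝ)..x, r u) (r t) t := by
    refine intervalIntegral.integral_hasDerivAt_right hri ?_ ?_
    · exact ContinuousOn.stronglyMeasurableAtFilter isOpen_Ioi
        (hc.mono (fun x hx => le_of_lt hx)) t ht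
    · exact hc.continuousAt (Ici_mem_nhds ht)
  have hinv : HasDerivAt (fun x : ℝ => 1 / x) (-(1/t^2)) t := by
    simpa [one_div] using hasDerivAt_inv (ne_of_gt ht)
  have hA' : HasDerivAt (fun x => (1 / x) * ∫ u in (0:ℝ)..x, r u)
      (-(1/t^2) * (∫ u in (0:ℝ)..t, r u) + (1/t) * r t) t := hinv.mul hFt
  have hslope : Tendsto (slope (fun x => (1 / x) * ∫ u in (0:ℝ)..x, r u) t)
      (𝓝[>] t) (𝓝 (-(1/t^2) * (∫ u in (0:ℝ)..t, r u) + (1/t) * r t)) :=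
    ((hasDerivAt_iff_tendsto_slope).1 hA').mono_left
      (nhdsWithin_mono t (fun y hy => ne_of_gt hy))
  have hderiv_nonneg : 0 ≤ -(1/t^2) * (∫ u in (0:ℝ)..t, r u) + (1/t) * r t := by
    refine ge_of_tendsto hslope ?_
    filter_upwards [self_mem_nhdsWithin] with y hy
    have hy' : (t : ℝ) < y := hy
    have h1 : (fun x => (1 / x) * ∫ u in (0:ℝ)..x, r u) t
        ≤ (fun x => (1 / x) * ∫ u in (0:ℝ)..x, r u) y :=
      hIFRA ht (lt_trans ht hy') hy'.le
    have : (0:ℝ) < y - t := by linarith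
    rw [slope_def_field]
    exact div_nonneg (by simpa using sub_nonneg.2 h1) this.le
  have hrA : (1/t) * (∫ u in (0:ℝ)..t, r u) ≤ r t := by
    have ht' : t ≠ 0 := ne_of_gt ht
    have e1 : (1/t) * (∫ u in (0:ℝ)..t, r u)
        = t * ((1/t^2) * ∫ u in (0:ℝ)..t, r u) := by field_simp
    calc (1/t) * (∫ u in (0:ℝ)..t, r u)
        = t * ((1/t^2) * ∫ u in (0:ℝ)..t, r u) := e1
      _ ≤ t * ((1/t) * r t) := mul_le_mul_of_nonneg_left (by linarith) ht.le
      _ = r t := by field_simp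
  -- Step 2: Jensen setup
  set μ : Measure ℝ := volume.restrict (Set.Ioc 0 t) with hμ
  have hμuniv : μ Set.univ = ENNReal.ofReal t := by
    simp [hμ, Measure.restrict_apply_univ, Real.volume_Ioc, ht.le]
  haveI : IsFiniteMeasure μ := ⟨by rw [hμuniv]; exact ENNReal.ofReal_lt_top⟩
  haveI : NeZero μ := by
    refine ⟨fun h => ?_⟩
    have h0 : (0:ENNReal) = ENNReal.ofReal t := by rw [← hμuniv, h]; simp
    rw [eq_comm, ENNReal.ofReal_eq_zero] at h0
    linarith
  have havg : ∀ f : ℝ → ℝ, ⨍ x, f x ∂μ = (1/t) * ∫ u in (0:ℝ)..t, f u := by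
    intro f
    rw [average_eq, measureReal_def, hμuniv, ENNReal.toReal_ofReal ht.le,
      intervalIntegral.integral_of_le ht.le]
    simp [smul_eq_mul, one_div, hμ]
  have hmem : ∀ᵐ u ∂μ, r u ∈ Set.Ici m := by
    rw [hμ, ae_restrict_iff' measurableSet_Ioc]
    filter_upwards with u hu
    exact hmin u ⟨hu.1.le, hu.2⟩
  have hir : MeasureTheory.Integrable r μ :=
    (hct.integrableOn_Icc).mono_set Set.Ioc_subset_Icc_self
  have hsubset : Set.Ici m ⊆ Set.Ioi (0:ℝ) := fun x hx => lt_of_lt_of_le hm hx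
  have hne : ∀ x ∈ Set.Icc (0:ℝ) t, r x ≠ 0 := fun x hx => (hpos x (htIcc hx)).ne'
  -- Jensen for log
  have hilog : MeasureTheory.Integrable (Real.log ∘ r) μ :=
    ((hct.log hne).integrableOn_Icc).mono_set Set.Ioc_subset_Icc_self
  have hconcave : ConcaveOn ℝ (Set.Ici m) Real.log :=
    strictConcaveOn_log_Ioi.concaveOn.subset hsubset (convex_Ici m)
  have hlogc : ContinuousOn Real.log (Set.Ici m) :=
    Real.continuousOn_log.mono (fun x hx => (hsubset hx).ne')
  obtain ⟨hAmem, hjensen⟩ := hconcave.average_mem_hypograph hlogc isClosed_Ici hmem hir hilog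
  have hApos : 0 < ⨍ x, r x ∂μ := lt_of_lt_of_le hm hAmem
  have hAr : ⨍ x, r x ∂μ ≤ r t := by rw [havg r]; exact hrA
  constructor
  · rw [one_le_div (Real.exp_pos _)]
    calc Real.exp ((1/t) * ∫ u in (0:ℝ)..t, Real.log (r u))
        = Real.exp (⨍ x, Real.log (r x) ∂μ) := by rw [havg (fun u => Real.log (r u))]
      _ ≤ Real.exp (Real.log (⨍ x, r x ∂μ)) := Real.exp_le_exp.2 hjensen
      _ = ⨍ x, r x ∂μ := Real.exp_log hApos
      _ ≤ r t := hAr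
  · -- Jensen for inv
    have hconvex : ConvexOn ℝ (Set.Ici m) (fun x : ℝ => x⁻¹) := by
      have := convexOn_zpow (𝕜 := ℝ) (-1)
      simp only [zpow_neg, zpow_one] at this
      exact this.subset hsubset (convex_Ici m)
    have hinvc : ContinuousOn (fun x : ℝ => x⁻¹) (Set.Ici m) :=
      continuousOn_inv₀.mono (fun x hx => (hsubset hx).ne')
    have hiinv : MeasureTheory.Integrable ((fun x : ℝ => x⁻¹) ∘ r) μ :=
      ((hct.inv₀ hne).integrableOn_Icc).mono_set Set.Ioc_subset_Icc_self
    have hjensen2 : (⨍ x, r x ∂μ)⁻¹ ≤ ⨍ x, (r x)⁻¹ ∂μ :=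
      hconvex.map_average_le hinvc isClosed_Ici hmem hir hiinv
    have hBpos : 0 < ⨍ x, (r x)⁻¹ ∂μ := lt_of_lt_of_le (inv_pos.2 hApos) hjensen2
    have hB : (⨍ x, (r x)⁻¹ ∂μ)⁻¹ ≤ r t := by
      calc (⨍ x, (r x)⁻¹ ∂μ)⁻¹ ≤ ((⨍ x, r x ∂μ)⁻¹)⁻¹ :=
            inv_anti₀ (inv_pos.2 hApos) hjensen2
        _ = ⨍ x, r x ∂μ := inv_inv _
        _ ≤ r t := hAr
    rw [one_le_div (by rw [← havg (fun u => (r u)⁻¹)]; exact inv_pos.2 hBpos)]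
    rw [← havg (fun u => (r u)⁻¹)]
    exact hB
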